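/- Let ψ₀, ψ₁ : [0,∞) → [0,∞) be concave continuous strictly increasing bijections and let θ ∈ (0,1). Then the function ψ_θ(t) = ψ₀(t)^{1−θ} ψ₁(t)^θ is also a concave continuous strictly increasing bijection from [0,∞) to [0,∞). -/
import Mathlib


open Set

lemma geom2_aux {θ a c x y : ℝ} (hθ0 : 0 < θ) (hθ1 : θ < 1)
    (ha : 0 ≤ a) (hc : 0 ≤ c) (hx : 0 < x) (hy : 0 < y) :
    a ^ (1 - θ) * c ^ θ ≤ ((1 - θ) * (a / x) + θ * (c / y)) * (x ^ (1 - θ) * y ^ θ) := by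
  have key := Real.geom_mean_le_arith_mean2_weighted (by linarith : (0:ℝ) ≤ 1 - θ)
    hθ0.le (div_nonneg ha hx.le) (div_nonneg hc hy.le) (by ring)
  have hxp : (0:ℝ) < x ^ (1 - θ) := Real.rpow_pos_of_pos hx _
  have hyp : (0:ℝ) < y ^ θ := Real.rpow_pos_of_pos hy _
  have h1 : (a / x) ^ (1 - θ) * (c / y) ^ θ * (x ^ (1 - θ) * y ^ θ)
      = a ^ (1 - θ) * c ^ θ := by
    rw [Real.div_rpow ha hx.le, Real.div_rpow hc hy.le]
    field_simp
  calc a ^ (1 - θ) * c ^ θ = (a / x) ^ (1 - θ) * (c / y) ^ θ * (x ^ (1 - θ) * y ^ θ) := h1.symm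
    _ ≤ ((1 - θ) * (a / x) + θ * (c / y)) * (x ^ (1 - θ) * y ^ θ) := by
        apply mul_le_mul_of_nonneg_right key (by positivity)

lemma geom2 {θ : ℝ} (hθ0 : 0 < θ) (hθ1 : θ < 1) {a b c d l m : ℝ}
    (ha : 0 ≤ a) (hb : 0 ≤ b) (hc : 0 ≤ c) (hd : 0 ≤ d)
    (hl : 0 ≤ l) (hm : 0 ≤ m) (hs : l + m = 1) :
    l * (a ^ (1 - θ) * c ^ θ) + m * (b ^ (1 - θ) * d ^ θ)
      ≤ (l * a + m * b) ^ (1 - θ) * (l * c + m * d) ^ θ := by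
  set x := l * a + m * b with hxdef
  set y := l * c + m * d with hydef
  have hx0 : 0 ≤ x := by positivity
  have hy0 : 0 ≤ y := by positivity
  have hθ1' : (0:ℝ) < 1 - θ := by linarith
  rcases eq_or_lt_of_le hx0 with hx | hx
  · -- x = 0 : both l*a and m*b are zero
    have hla : l * a = 0 := by nlinarith [mul_nonneg hl ha, mul_nonneg hm hb]
    have hmb : m * b = 0 := by nlinarith [mul_nonneg hl ha, mul_nonneg hm hb]
    have h1 : l * (a ^ (1 - θ) * c ^ θ) = 0 := by
      rcases mul_eq_zero.1 hla with h | h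
      · simp [h]
      · simp [h, Real.zero_rpow hθ1'.ne']
    have h2 : m * (b ^ (1 - θ) * d ^ θ) = 0 := by
      rcases mul_eq_zero.1 hmb with h | h
      · simp [h]
      · simp [h, Real.zero_rpow hθ1'.ne']
    rw [h1, h2, add_zero]
    exact mul_nonneg (Real.rpow_nonneg hx0 _) (Real.rpow_nonneg hy0 _)
  rcases eq_or_lt_of_le hy0 with hy | hy
  · have hlc : l * c = 0 := by nlinarith [mul_nonneg hl hc, mul_nonneg hm hd]
    have hmd : m * d = 0 := by nlinarith [mul_nonneg hl hc, mul_nonneg hm hd]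
    have h1 : l * (a ^ (1 - θ) * c ^ θ) = 0 := by
      rcases mul_eq_zero.1 hlc with h | h
      · simp [h]
      · simp [h, Real.zero_rpow hθ0.ne']
    have h2 : m * (b ^ (1 - θ) * d ^ θ) = 0 := by
      rcases mul_eq_zero.1 hmd with h | h
      · simp [h]
      · simp [h, Real.zero_rpow hθ0.ne']
    rw [h1, h2, add_zero]
    exact mul_nonneg (Real.rpow_nonneg hx0 _) (Real.rpow_nonneg hy0 _)
  · have k1 := geom2_aux hθ0 hθ1 ha hc hx hy
    have k2 := geom2_aux hθ0 hθ1 hb hd hx hy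
    have hX : (0:ℝ) ≤ x ^ (1 - θ) * y ^ θ := by positivity
    have hsum : l * ((1 - θ) * (a / x) + θ * (c / y)) + m * ((1 - θ) * (b / x) + θ * (d / y)) = 1 := by
      have : l * ((1 - θ) * (a / x) + θ * (c / y)) + m * ((1 - θ) * (b / x) + θ * (d / y))
          = (1 - θ) * (x / x) + θ * (y / y) := by
        field_simp
        ring
      rw [this, div_self hx.ne', div_self hy.ne']; ring
    calc l * (a ^ (1 - θ) * c ^ θ) + m * (b ^ (1 - θ) * d ^ θ)
        ≤ l * (((1 - θ) * (a / x) + θ * (c / y)) * (x ^ (1 - θ) * y ^ θ))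
          + m * (((1 - θ) * (b / x) + θ * (d / y)) * (x ^ (1 - θ) * y ^ θ)) := by
          gcongr
      _ = (l * ((1 - θ) * (a / x) + θ * (c / y)) + m * ((1 - θ) * (b / x) + θ * (d / y)))
          * (x ^ (1 - θ) * y ^ θ) := by ring
      _ = x ^ (1 - θ) * y ^ θ := by rw [hsum, one_mul]

/-- Calderón: the geometric mean `ψ_θ = ψ₀^{1-θ} ψ₁^θ` of two concave
continuous strictly increasing bijections of `[0,∞)` is again a concave continuous
strictly increasing bijection of `[0,∞)`. -/
theorem geometric_mean_concave_bijection
    (ψ₀ ψ₁ : ℝ → ℝ) (θ : ℝ) (hθ : θ ∈ Ioo (0 : ℝ) 1)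
    (h₀c : ContinuousOn ψ₀ (Ici 0)) (h₀m : StrictMonoOn ψ₀ (Ici 0))
    (h₀b : BijOn ψ₀ (Ici 0) (Ici 0)) (h₀cc : ConcaveOn ℝ (Ici 0) ψ₀)
    (h₁c : ContinuousOn ψ₁ (Ici 0)) (h₁m : StrictMonoOn ψ₁ (Ici 0))
    (h₁b : BijOn ψ₁ (Ici 0) (Ici 0)) (h₁cc : ConcaveOn ℝ (Ici 0) ψ₁) :
    ContinuousOn (fun t => ψ₀ t ^ (1 - θ) * ψ₁ t ^ θ) (Ici 0) ∧
    StrictMonoOn (fun t => ψ₀ t ^ (1 - θ) * ψ₁ t ^ θ) (Ici 0) ∧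
    BijOn (fun t => ψ₀ t ^ (1 - θ) * ψ₁ t ^ θ) (Ici 0) (Ici 0) ∧
    ConcaveOn ℝ (Ici 0) (fun t => ψ₀ t ^ (1 - θ) * ψ₁ t ^ θ) := by
  obtain ⟨hθ0, hθ1⟩ := hθ
  have hα : (0:ℝ) < 1 - θ := by linarith
  have h₀n : ∀ t ∈ Ici (0:ℝ), 0 ≤ ψ₀ t := fun t ht => h₀b.mapsTo ht
  have h₁n : ∀ t ∈ Ici (0:ℝ), 0 ≤ ψ₁ t := fun t ht => h₁b.mapsTo ht
  -- ψ 0 = 0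
  have hzero : ∀ (ψ : ℝ → ℝ), StrictMonoOn ψ (Ici 0) → BijOn ψ (Ici 0) (Ici 0) → ψ 0 = 0 := by
    intro ψ hm hb
    by_contra h
    have h0 : 0 < ψ 0 := lt_of_le_of_ne (hb.mapsTo (mem_Ici.mpr le_rfl)) (Ne.symm h)
    obtain ⟨t, ht, htv⟩ := hb.surjOn (show ψ 0 / 2 ∈ Ici (0:ℝ) from by simp; linarith)
    have := hm.monotoneOn (le_refl (0:ℝ)) ht ht
    rw [htv] at this
    linarith
  have h₀z : ψ₀ 0 = 0 := hzero ψ₀ h₀m h₀b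
  have h₁z : ψ₁ 0 = 0 := hzero ψ₁ h₁m h₁b
  have hcont : ContinuousOn (fun t => ψ₀ t ^ (1 - θ) * ψ₁ t ^ θ) (Ici 0) :=
    (h₀c.rpow_const fun x _ => Or.inr hα.le).mul (h₁c.rpow_const fun x _ => Or.inr hθ0.le)
  have hmono : StrictMonoOn (fun t => ψ₀ t ^ (1 - θ) * ψ₁ t ^ θ) (Ici 0) := by
    intro a ha b hb hab
    exact mul_lt_mul''
      (Real.rpow_lt_rpow (h₀n a ha) (h₀m ha hb hab) hα)
      (Real.rpow_lt_rpow (h₁n a ha) (h₁m ha hb hab) hθ0)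
      (Real.rpow_nonneg (h₀n a ha) _) (Real.rpow_nonneg (h₁n a ha) _)
  have hf0 : ψ₀ 0 ^ (1 - θ) * ψ₁ 0 ^ θ = 0 := by
    rw [h₀z, h₁z, Real.zero_rpow hα.ne', zero_mul]
  refine ⟨hcont, hmono, ⟨?_, hmono.injOn, ?_⟩, ?_⟩
  · intro t ht
    exact mul_nonneg (Real.rpow_nonneg (h₀n t ht) _) (Real.rpow_nonneg (h₁n t ht) _)
  · -- surjectivity
    intro y hy
    have hy0 : (0:ℝ) ≤ y := hy
    obtain ⟨t₀, ht₀, ht₀v⟩ := h₀b.surjOn (show y + 1 ∈ Ici (0:ℝ) from by simp; linarith)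
    obtain ⟨t₁, ht₁, ht₁v⟩ := h₁b.surjOn (show y + 1 ∈ Ici (0:ℝ) from by simp; linarith)
    set T := max t₀ t₁ with hT
    have hT0 : (0:ℝ) ≤ T := le_trans ht₀ (le_max_left _ _)
    have hTmem : T ∈ Ici (0:ℝ) := hT0
    have h0T : ψ₀ T ≥ y + 1 := by
      rw [← ht₀v]; exact h₀m.monotoneOn ht₀ hTmem (le_max_left _ _)
    have h1T : ψ₁ T ≥ y + 1 := by
      rw [← ht₁v]; exact h₁m.monotoneOn ht₁ hTmem (le_max_right _ _)
    have hy1 : (0:ℝ) < y + 1 := by linarith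
    have hfT : y ≤ ψ₀ T ^ (1 - θ) * ψ₁ T ^ θ := by
      have : (y + 1) ^ (1 - θ) * (y + 1) ^ θ ≤ ψ₀ T ^ (1 - θ) * ψ₁ T ^ θ :=
        mul_le_mul (Real.rpow_le_rpow hy1.le h0T hα.le)
          (Real.rpow_le_rpow hy1.le h1T hθ0.le)
          (Real.rpow_nonneg hy1.le _) (Real.rpow_nonneg (h₀n T hTmem) _)
      rw [← Real.rpow_add hy1] at this
      norm_num at this
      linarith
    have hsub : Icc (0:ℝ) T ⊆ Ici 0 := Icc_subset_Ici_self
    have := intermediate_value_Icc hT0 (hcont.mono hsub)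
    have hyIn : y ∈ Icc ((fun t => ψ₀ t ^ (1 - θ) * ψ₁ t ^ θ) 0)
        ((fun t => ψ₀ t ^ (1 - θ) * ψ₁ t ^ θ) T) := by
      simp only [hf0]
      exact ⟨hy0, hfT⟩
    obtain ⟨t, ht, htv⟩ := this hyIn
    exact ⟨t, hsub ht, htv⟩
  · -- concavity
    refine ⟨convex_Ici 0, ?_⟩
    intro x hx y hy l m hl hm hs
    simp only [smul_eq_mul]
    have hmem : l * x + m * y ∈ Ici (0:ℝ) := (convex_Ici 0) hx hy hl hm hs
    have k₀ := h₀cc.2 hx hy hl hm hs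
    have k₁ := h₁cc.2 hx hy hl hm hs
    simp only [smul_eq_mul] at k₀ k₁
    have ka : 0 ≤ l * ψ₀ x + m * ψ₀ y :=
      add_nonneg (mul_nonneg hl (h₀n x hx)) (mul_nonneg hm (h₀n y hy))
    have kc : 0 ≤ l * ψ₁ x + m * ψ₁ y :=
      add_nonneg (mul_nonneg hl (h₁n x hx)) (mul_nonneg hm (h₁n y hy))
    calc l * (ψ₀ x ^ (1 - θ) * ψ₁ x ^ θ) + m * (ψ₀ y ^ (1 - θ) * ψ₁ y ^ θ)
        ≤ (l * ψ₀ x + m * ψ₀ y) ^ (1 - θ) * (l * ψ₁ x + m * ψ₁ y) ^ θ :=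
          geom2 hθ0 hθ1 (h₀n x hx) (h₀n y hy) (h₁n x hx) (h₁n y hy) hl hm hs
      _ ≤ ψ₀ (l * x + m * y) ^ (1 - θ) * ψ₁ (l * x + m * y) ^ θ :=
          mul_le_mul (Real.rpow_le_rpow ka k₀ hα.le) (Real.rpow_le_rpow kc k₁ hθ0.le)
            (Real.rpow_nonneg kc _) (Real.rpow_nonneg (h₀n _ hmem) _)
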